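/- The image of the set 𝒰 = {Id + X : X ∈ U(l)} under the matrix inversion map W ↦ W^{-1} (defined where the matrix is invertible) is the set ℒ = {W ∈ M(l×l,ℂ) : Id - W* - W = 0} = (1/2)Id + u(l), intersected with the invertible matrices. -/

import Mathlib

open Matrix

/-- The image of `𝒰 = {1 + X : X ∈ U(l)}` under matrix inversion (where defined) is the set
`ℒ = {W : 1 - Wᴴ - W = 0}` intersected with the invertible matrices. -/
theorem stmt7 (l : ℕ) :
    {W : Matrix (Fin l) (Fin l) ℂ |
        ∃ X ∈ Matrix.unitaryGroup (Fin l) ℂ, IsUnit (1 + X) ∧ W = (1 + X)⁻¹} =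
      {W : Matrix (Fin l) (Fin l) ℂ | 1 - Wᴴ - W = 0 ∧ IsUnit W} := by
  ext W
  simp only [Set.mem_setOf_eq]
  constructor
  · rintro ⟨X, hX, hU, rfl⟩
    have hX1 : Xᴴ * X = 1 := by
      have := hX.1
      rwa [Matrix.star_eq_conjTranspose] at this
    have hd : IsUnit (1 + X).det := (Matrix.isUnit_iff_isUnit_det _).mp hU
    have hct : (1 + X)ᴴ = 1 + Xᴴ := by simp [Matrix.conjTranspose_add]
    have hU' : IsUnit (1 + Xᴴ) := by
      rw [← hct, Matrix.isUnit_iff_isUnit_det, Matrix.det_conjTranspose]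
      exact hd.star
    have hd' : IsUnit (1 + Xᴴ).det := (Matrix.isUnit_iff_isUnit_det _).mp hU'
    have hW : ((1 + X)⁻¹)ᴴ = (1 + Xᴴ)⁻¹ := by
      rw [Matrix.conjTranspose_nonsing_inv, hct]
    have key : (1 + Xᴴ) * (1 + X) = (1 + X) + (1 + Xᴴ) := by
      have expand : (1 + Xᴴ) * (1 + X) = 1 + X + Xᴴ + Xᴴ * X := by noncomm_ring
      rw [expand, hX1]; abel
    have sum1 : (1 + Xᴴ)⁻¹ + (1 + X)⁻¹ = 1 := by
      have e1 : (1 + Xᴴ)⁻¹ * ((1 + Xᴴ) * (1 + X)) * (1 + X)⁻¹ = 1 := by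
        rw [← mul_assoc, Matrix.nonsing_inv_mul _ hd', one_mul,
          Matrix.mul_nonsing_inv _ hd]
      rw [key, mul_add, add_mul, mul_assoc, Matrix.mul_nonsing_inv _ hd, mul_one,
        Matrix.nonsing_inv_mul _ hd', one_mul] at e1
      exact e1
    constructor
    · rw [hW, sub_sub, sum1, sub_self]
    · rw [Matrix.isUnit_iff_isUnit_det, Matrix.det_nonsing_inv]
      exact hd.ringInverse
  · rintro ⟨h1, hWU⟩
    have hd : IsUnit W.det := (Matrix.isUnit_iff_isUnit_det _).mp hWU
    have hsum : Wᴴ + W = 1 := by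
      have := sub_eq_zero.mp (by rwa [sub_sub] at h1)
      exact this.symm
    have hdH : IsUnit Wᴴ.det := by rw [Matrix.det_conjTranspose]; exact hd.star
    have hinv : (1 : Matrix (Fin l) (Fin l) ℂ) + (W⁻¹ - 1) = W⁻¹ := by abel
    refine ⟨W⁻¹ - 1, ?_, ?_, ?_⟩
    · rw [Matrix.mem_unitaryGroup_iff, Matrix.star_eq_conjTranspose,
        Matrix.conjTranspose_sub, Matrix.conjTranspose_one,
        Matrix.conjTranspose_nonsing_inv]
      have key : W⁻¹ * Wᴴ⁻¹ = W⁻¹ + Wᴴ⁻¹ := by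
        have e1 : W⁻¹ * (Wᴴ + W) * Wᴴ⁻¹ = W⁻¹ * Wᴴ⁻¹ := by
          rw [hsum, mul_one]
        rw [mul_add, add_mul, mul_assoc, Matrix.mul_nonsing_inv _ hdH, mul_one,
          mul_assoc, ← mul_assoc W⁻¹ W, Matrix.nonsing_inv_mul _ hd, one_mul] at e1
        exact e1.symm
      have expand : (W⁻¹ - 1) * (Wᴴ⁻¹ - 1) = W⁻¹ * Wᴴ⁻¹ - W⁻¹ - Wᴴ⁻¹ + 1 := by
        noncomm_ring
      rw [expand, key]; abel
    · rw [hinv, Matrix.isUnit_iff_isUnit_det, Matrix.det_nonsing_inv]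
      exact hd.ringInverse
    · rw [hinv, Matrix.nonsing_inv_nonsing_inv _ hd]
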